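/- Let A, B ∈ GL(2,F) and let P(λ) be a matrix polynomial of grade g. Then the composition of Möbius transformations satisfies M_B[M_A[P]](λ) = M_{AB}[P](λ). -/

import Mathlib

open Polynomial

/-- The Möbius transformation of a matrix polynomial `P` (of grade `g`) induced by the
2×2 matrix `A = [[a,b],[c,d]]`. -/
noncomputable def mobius {F : Type*} [Field F] {m n : Type*}
    (a b c d : F) (g : ℕ) (P : Matrix m n (Polynomial F)) : Matrix m n (Polynomial F) :=
  ∑ i ∈ Finset.range (g + 1),
    ((C a * X + C b) ^ i * (C c * X + C d) ^ (g - i)) • P.map (fun p => C (p.coeff i))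

noncomputable def mobiusT {F : Type*} [Field F] (a b c d : F) (g : ℕ) (p : Polynomial F) :
    Polynomial F :=
  ∑ i ∈ Finset.range (g + 1),
    (C a * X + C b) ^ i * (C c * X + C d) ^ (g - i) * C (p.coeff i)

lemma mobiusT_natDegree_le {F : Type*} [Field F] (a b c d : F) (g : ℕ) (p : Polynomial F) :
    (mobiusT a b c d g p).natDegree ≤ g := by
  apply natDegree_sum_le_of_forall_le
  intro k hk
  have hk' : k ≤ g := by simpa [Nat.lt_succ_iff] using hk
  refine natDegree_mul_le.trans ?_
  have h1 : ((C a * X + C b : Polynomial F) ^ k).natDegree ≤ k := by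
    refine natDegree_pow_le.trans ?_
    have := natDegree_linear_le (a := a) (b := b)
    nlinarith [this]
  have h2 : ((C c * X + C d : Polynomial F) ^ (g - k)).natDegree ≤ g - k := by
    refine natDegree_pow_le.trans ?_
    have := natDegree_linear_le (a := c) (b := d)
    nlinarith [this]
  have := natDegree_mul_le (p := (C a * X + C b : Polynomial F) ^ k)
    (q := (C c * X + C d : Polynomial F) ^ (g - k))
  simp [natDegree_C]
  omega

lemma linear_ne_zero' {F : Type*} [Field F] {c' d' a' b' : F} (hB : a' * d' - b' * c' ≠ 0) :
    (C c' * X + C d' : Polynomial F) ≠ 0 := by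
  intro h
  have hc : c' = 0 := by
    have := congrArg (fun q => q.coeff 1) h
    simpa using this
  have hd : d' = 0 := by
    have := congrArg (fun q => q.coeff 0) h
    simpa using this
  rw [hc, hd] at hB
  simp at hB


lemma aux_lin {F : Type*} [Field F] {K : Type*} [CommRing K]
    (ι : Polynomial F →+* K) (x y : F) (U V : Polynomial F) :
    ι (C x * U + C y * V) = ι (C x) * ι U + ι (C y) * ι V := by
  rw [map_add, map_mul, map_mul]

lemma mobiusT_comp {F : Type*} [Field F] (a b c d a' b' c' d' : F)
    (hB : a' * d' - b' * c' ≠ 0) (g : ℕ) (p : Polynomial F) :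
    mobiusT a' b' c' d' g (mobiusT a b c d g p) =
      mobiusT (a * a' + b * c') (a * b' + b * d') (c * a' + d * c') (c * b' + d * d') g p := by
  set K := FractionRing (Polynomial F)
  have hinj : Function.Injective (algebraMap (Polynomial F) K) :=
    IsFractionRing.injective (Polynomial F) K
  apply hinj
  set ι := algebraMap (Polynomial F) K with hι
  set φ : F →+* K := ι.comp Polynomial.C with hφ
  set U : Polynomial F := C a' * X + C b' with hU
  set V : Polynomial F := C c' * X + C d' with hV
  have hVne : V ≠ 0 := linear_ne_zero' hB
  have hVK : ι V ≠ 0 := by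
    simpa using (map_ne_zero_iff ι hinj).mpr hVne
  set t : K := ι U / ι V with ht
  set q : Polynomial F := mobiusT a b c d g p with hq
  have hqdeg : q.natDegree < g + 1 := Nat.lt_succ_of_le (mobiusT_natDegree_le a b c d g p)
  -- Step A: the image of the LHS as a sum
  have stepA : ι (mobiusT a' b' c' d' g q) =
      ∑ k ∈ Finset.range (g + 1), ι U ^ k * ι V ^ (g - k) * φ (q.coeff k) := by
    rw [mobiusT, map_sum]
    refine Finset.sum_congr rfl fun k hk => ?_
    rw [map_mul, map_mul, map_pow, map_pow]
    rfl
  -- Step B: rewrite termwise using t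
  have stepB : ∀ k ∈ Finset.range (g + 1), ∀ x : K,
      ι U ^ k * ι V ^ (g - k) * x = ι V ^ g * (x * t ^ k) := by
    intro k hk x
    have hk' : k ≤ g := by simpa [Nat.lt_succ_iff] using hk
    have hsplit : ι V ^ g = ι V ^ (g - k) * ι V ^ k := by
      rw [← pow_add]; congr 1; omega
    rw [ht, div_pow, hsplit]
    rw [div_eq_mul_inv]
    have hVk := mul_inv_cancel₀ (pow_ne_zero k hVK)
    linear_combination (-(ι U ^ k * ι V ^ (g - k) * x)) * hVk
  -- Step C: the sum equals ι V ^ g * eval₂ φ t q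
  have stepC : ι (mobiusT a' b' c' d' g q) = ι V ^ g * eval₂ φ t q := by
    rw [stepA, eval₂_eq_sum_range' φ hqdeg t, Finset.mul_sum]
    exact Finset.sum_congr rfl fun k hk => stepB k hk _
  -- Step D: evaluate eval₂ of the inner mobiusT
  have stepD : eval₂ φ t q =
      ∑ k ∈ Finset.range (g + 1),
        (φ a * t + φ b) ^ k * (φ c * t + φ d) ^ (g - k) * φ (p.coeff k) := by
    rw [hq, mobiusT, eval₂_finset_sum]
    refine Finset.sum_congr rfl fun k hk => ?_
    simp [eval₂_mul, eval₂_pow, eval₂_add, eval₂_C, eval₂_X]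
  have hUt : ι V * t = ι U := by
    rw [ht, div_eq_mul_inv]; linear_combination (ι U) * mul_inv_cancel₀ hVK
  -- Step F: the two linear combinations
  have stepF1 : ι V * (φ a * t + φ b) =
      ι (C (a * a' + b * c') * X + C (a * b' + b * d')) := by
    have e2 : (C (a * a' + b * c') * X + C (a * b' + b * d') : Polynomial F)
        = C a * U + C b * V := by
      rw [hU, hV]; simp [map_add, map_mul]; ring
    rw [e2, aux_lin]
    simp only [hφ, RingHom.comp_apply]
    rw [← hUt]; ring
  have stepF2 : ι V * (φ c * t + φ d) =
      ι (C (c * a' + d * c') * X + C (c * b' + d * d')) := by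
    have e2 : (C (c * a' + d * c') * X + C (c * b' + d * d') : Polynomial F)
        = C c * U + C d * V := by
      rw [hU, hV]; simp [map_add, map_mul]; ring
    rw [e2, aux_lin]
    simp only [hφ, RingHom.comp_apply]
    rw [← hUt]; ring
  -- Step G: image of RHS
  have stepG : ι (mobiusT (a * a' + b * c') (a * b' + b * d') (c * a' + d * c')
      (c * b' + d * d') g p) =
      ∑ k ∈ Finset.range (g + 1),
        ι (C (a * a' + b * c') * X + C (a * b' + b * d')) ^ k *
          ι (C (c * a' + d * c') * X + C (c * b' + d * d')) ^ (g - k) * φ (p.coeff k) := by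
    rw [mobiusT, map_sum]
    refine Finset.sum_congr rfl fun k hk => ?_
    rw [map_mul, map_mul, map_pow, map_pow]
    rfl
  rw [stepC, stepD, stepG, Finset.mul_sum]
  refine Finset.sum_congr rfl fun k hk => ?_
  have hk' : k ≤ g := by simpa [Nat.lt_succ_iff] using hk
  have hsplit : ι V ^ g = ι V ^ k * ι V ^ (g - k) := by
    rw [← pow_add]; congr 1; omega
  calc ι V ^ g * ((φ a * t + φ b) ^ k * (φ c * t + φ d) ^ (g - k) * φ (p.coeff k))
      = (ι V * (φ a * t + φ b)) ^ k * (ι V * (φ c * t + φ d)) ^ (g - k) * φ (p.coeff k) := by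
        rw [hsplit, mul_pow, mul_pow]; ring
    _ = _ := by rw [stepF1, stepF2]

lemma mobius_apply {F : Type*} [Field F] {m n : Type*} (a b c d : F) (g : ℕ)
    (P : Matrix m n (Polynomial F)) (i : m) (j : n) :
    mobius a b c d g P i j = mobiusT a b c d g (P i j) := by
  simp only [mobius, mobiusT, Matrix.sum_apply, Matrix.smul_apply, Matrix.map_apply,
    smul_eq_mul]

/-- Composition of Möbius transformations: `M_B[M_A[P]] = M_{AB}[P]`, where
`A = [[a,b],[c,d]]`, `B = [[a',b'],[c',d']]`, so that
`AB = [[a*a'+b*c', a*b'+b*d'],[c*a'+d*c', c*b'+d*d']]`, all transformations taken with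
grade `g`. -/
theorem mobius_comp {F : Type*} [Field F] {m n : Type*}
    (a b c d a' b' c' d' : F)
    (hA : a * d - b * c ≠ 0) (hB : a' * d' - b' * c' ≠ 0) (g : ℕ)
    (P : Matrix m n (Polynomial F)) (hP : ∀ i j, (P i j).degree ≤ (g : ℕ)) :
    mobius a' b' c' d' g (mobius a b c d g P) =
      mobius (a * a' + b * c') (a * b' + b * d') (c * a' + d * c') (c * b' + d * d') g P := by
  apply Matrix.ext
  intro i j
  rw [mobius_apply, mobius_apply, mobius_apply]
  exact mobiusT_comp a b c d a' b' c' d' hB g (P i j)
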